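/- Let ρ : ℂ → Mat_N(ℂ) be a holomorphic family of representation data such that each matrix entry is exponentially bounded, and suppose ρ(s+1) is conjugate to ρ(s) for all s in a set not contained in a countable union of proper analytic subsets of ℂ. If Ψ is any conjugation-invariant polynomial function on Mat_N(ℂ) (e.g. a coefficient of the characteristic polynomial), then s ↦ Ψ(ρ(s)) equals F(e^{2πis}) for a rational function F on ℂ^×. -/

import Mathlib

open Complex


lemma poly_of_growth : ∀ (n : ℕ) (f : ℂ → ℂ), Differentiable ℂ f →
    ∀ A : ℝ, (∀ z, ‖f z‖ ≤ A * max 1 ‖z‖ ^ n) →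
    ∃ p : Polynomial ℂ, ∀ z, f z = p.eval z := by
  intro n
  induction n with
  | zero =>
    intro f hf A hA
    obtain ⟨c, hc⟩ := hf.exists_eq_const_of_bounded (isBounded_iff_forall_norm_le.2
      ⟨A, by rintro x ⟨z, rfl⟩; simpa using hA z⟩)
    exact ⟨Polynomial.C c, fun z => by simp [hc]⟩
  | succ n ih =>
    intro f hf A hA
    have hApos : 0 ≤ A := by
      have := hA 0
      have h0 : (0:ℝ) ≤ ‖f 0‖ := norm_nonneg _
      have h1 : ‖f 0‖ ≤ A := by simpa using this
      linarith
    set g := dslope f 0 with hg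
    have hgd : Differentiable ℂ g := by
      rw [← differentiableOn_univ] at hf ⊢
      exact (differentiableOn_dslope (Filter.univ_mem)).2 hf
    obtain ⟨B, hB⟩ := (isCompact_closedBall (0:ℂ) 1).exists_bound_of_continuousOn
        hgd.continuous.continuousOn
    have key : ∀ z, ‖g z‖ ≤ (max B (A + ‖f 0‖)) * max 1 ‖z‖ ^ n := by
      intro z
      have h1n : (1:ℝ) ≤ max 1 ‖z‖ ^ n := one_le_pow₀ (le_max_left _ _)
      rcases le_or_gt ‖z‖ 1 with h1 | h1
      · have hb : ‖g z‖ ≤ B := hB z (by simpa [Metric.mem_closedBall] using h1)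
        nlinarith [le_max_left B (A + ‖f 0‖), norm_nonneg (g z)]
      · have hz0 : z ≠ 0 := by
          intro h; rw [h] at h1; simp at h1; linarith
        have hgz : g z = (f z - f 0) / z := by
          rw [hg, dslope_of_ne f hz0, slope_def_field]
          rw [sub_zero]
        rw [hgz, norm_div, div_le_iff₀ (by positivity)]
        have hmax : max 1 ‖z‖ = ‖z‖ := max_eq_right h1.le
        have h2 : ‖f z - f 0‖ ≤ A * ‖z‖ ^ (n+1) + ‖f 0‖ := by
          have := hA z; rw [hmax] at this
          calc ‖f z - f 0‖ ≤ ‖f z‖ + ‖f 0‖ := norm_sub_le _ _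
          _ ≤ A * ‖z‖ ^ (n+1) + ‖f 0‖ := by linarith
        have hzn : (1:ℝ) ≤ ‖z‖ ^ n := one_le_pow₀ h1.le
        have hM : A + ‖f 0‖ ≤ max B (A + ‖f 0‖) := le_max_right _ _
        calc ‖f z - f 0‖ ≤ A * ‖z‖ ^ (n+1) + ‖f 0‖ := h2
        _ = A * ‖z‖ ^ n * ‖z‖ + ‖f 0‖ := by ring
        _ ≤ A * ‖z‖ ^ n * ‖z‖ + ‖f 0‖ * (‖z‖ ^ n * ‖z‖) := by
            have hp1 : (1:ℝ) ≤ ‖z‖ ^ n * ‖z‖ := by nlinarith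
            nlinarith [norm_nonneg (f 0)]
        _ = (A + ‖f 0‖) * (‖z‖ ^ n * ‖z‖) := by ring
        _ ≤ (max B (A + ‖f 0‖)) * (‖z‖ ^ n * ‖z‖) := by
            have : (0:ℝ) ≤ ‖z‖ ^ n * ‖z‖ := by positivity
            exact mul_le_mul_of_nonneg_right hM this
        _ = (max B (A + ‖f 0‖)) * ‖z‖ ^ n * ‖z‖ := by ring
        _ = (max B (A + ‖f 0‖)) * max 1 ‖z‖ ^ n * ‖z‖ := by rw [hmax]
    obtain ⟨p, hp⟩ := ih g hgd _ key
    refine ⟨Polynomial.C (f 0) + Polynomial.X * p, fun z => ?_⟩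
    have hs := sub_smul_dslope f 0 z
    rw [sub_zero, smul_eq_mul, ← hg] at hs
    rw [Polynomial.eval_add, Polynomial.eval_C, Polynomial.eval_mul, Polynomial.eval_X, ← hp]
    linear_combination -hs

lemma periodic_int (f : ℂ → ℂ) (hper : ∀ s, f (s + 1) = f s) :
    ∀ (n : ℤ) (s : ℂ), f (s + n) = f s := by
  intro n
  induction n using Int.induction_on with
  | zero => simp
  | succ k ih => intro s; push_cast; rw [← add_assoc, hper (s + k)]; exact_mod_cast ih s
  | pred k ih =>
    intro s
    have := hper (s + (-(k:ℂ) - 1))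
    push_cast
    have h2 := ih (s - 1)
    push_cast at h2
    calc f (s + (-(k:ℂ) - 1)) = f (s - 1 + -(k:ℂ)) := by ring_nf
    _ = f (s - 1) := h2
    _ = f (s - 1 + 1) := (hper (s - 1)).symm
    _ = f s := by ring_nf

lemma key_descend (f : ℂ → ℂ) (hper : ∀ s, f (s + 1) = f s)
    {z : ℂ} (hz : z ≠ 0) {s : ℂ} (hs : Complex.exp (2 * (Real.pi : ℂ) * Complex.I * s) = z) :
    f (Complex.log z / (2 * (Real.pi : ℂ) * Complex.I)) = f s := by
  have h2pi : (2 * (Real.pi : ℂ) * Complex.I) ≠ 0 := by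
    simp [Real.pi_ne_zero, Complex.I_ne_zero]
  set t := Complex.log z / (2 * (Real.pi : ℂ) * Complex.I) with ht
  have hel : Complex.exp (2 * (Real.pi : ℂ) * Complex.I * t) = z := by
    rw [ht]; field_simp; exact Complex.exp_log hz
  have : Complex.exp (2 * (Real.pi : ℂ) * Complex.I * t - 2 * (Real.pi : ℂ) * Complex.I * s) = 1 := by
    rw [Complex.exp_sub, hel, hs, div_self hz]
  rw [Complex.exp_eq_one_iff] at this
  obtain ⟨n, hn⟩ := this
  have htn : t = s + n := by
    have h2 : (2 * (Real.pi : ℂ) * Complex.I) * (t - s) = (2 * (Real.pi : ℂ) * Complex.I) * n := by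
      rw [mul_sub, hn]; ring
    have h3 := mul_left_cancel₀ h2pi h2
    linear_combination h3
  rw [htn, periodic_int f hper n s]

lemma periodic_expbound_rat (f : ℂ → ℂ) (hf : Differentiable ℂ f)
    (hper : ∀ s, f (s + 1) = f s) (A c : ℝ) (hA : 0 ≤ A) (hc : 0 ≤ c)
    (hb : ∀ s, ‖f s‖ ≤ A * Real.exp (c * ‖s‖)) :
    ∃ (p : Polynomial ℂ) (m : ℕ), ∀ s : ℂ,
      f s = Polynomial.eval (Complex.exp (2 * (Real.pi:ℂ) * Complex.I * s)) p /
        (Complex.exp (2 * (Real.pi:ℂ) * Complex.I * s)) ^ m := by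
  classical
  set τ : ℂ := 2 * (Real.pi:ℂ) * Complex.I with hτ
  have hτne : τ ≠ 0 := by
    simp [hτ, Real.pi_ne_zero, Complex.I_ne_zero]
  have hτnorm : ‖τ‖ = 2 * Real.pi := by
    simp [hτ, map_mul, Complex.norm_I, Complex.norm_real,
      _root_.abs_of_nonneg Real.pi_pos.le]
  set h : ℂ → ℂ := fun z => f (Complex.log z / τ) with hh
  set m : ℕ := ⌈c / (2 * Real.pi)⌉₊ with hm
  set K : ℝ := A * Real.exp (c / 2) with hK
  have hKpos : 0 ≤ K := by positivity
  have hinv : ∀ z : ℂ, z ≠ 0 → ∀ s : ℂ, Complex.exp (τ * s) = z → h z = f s := by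
    intro z hz s hs
    exact key_descend f hper hz hs
  have hcomp : ∀ s : ℂ, h (Complex.exp (τ * s)) = f s := fun s =>
    hinv _ (Complex.exp_ne_zero _) s rfl
  -- differentiability away from 0
  have hdiff : ∀ z : ℂ, z ≠ 0 → DifferentiableAt ℂ h z := by
    intro z hz
    by_cases hmem : z ∈ Complex.slitPlane
    · exact (hf _).comp z ((Complex.differentiableAt_log hmem).div_const τ)
    · have hneg : -z ∈ Complex.slitPlane := by
        rw [Complex.mem_slitPlane_iff] at hmem ⊢
        push_neg at hmem
        obtain ⟨h1, h2⟩ := hmem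
        rcases lt_or_eq_of_le h1 with h1' | h1'
        · left; simpa using h1'
        · exfalso; apply hz; apply Complex.ext <;> simp [← h1', h2]
      set h₂ : ℂ → ℂ := fun w => f (Complex.log (-w) / τ + 2⁻¹) with hh₂
      have hd₂ : DifferentiableAt ℂ h₂ z := by
        apply (hf _).comp
        apply DifferentiableAt.add_const
        exact (((Complex.differentiableAt_log hneg).comp z
          (differentiable_neg _)).div_const τ)
      have heq : ∀ w : ℂ, w ≠ 0 → h w = h₂ w := by
        intro w hw
        apply hinv w hw
        rw [mul_add, Complex.exp_add]
        have h1 : τ * (Complex.log (-w) / τ) = Complex.log (-w) := by field_simp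
        have h2 : τ * 2⁻¹ = (Real.pi:ℂ) * Complex.I := by rw [hτ]; ring
        rw [h1, h2, Complex.exp_log (neg_ne_zero.2 hw), Complex.exp_pi_mul_I]
        ring
      apply hd₂.congr_of_eventuallyEq
      filter_upwards [isOpen_compl_singleton.mem_nhds (by simpa using hz)] with w hw
      exact heq w (by simpa using hw)
  -- bound
  have hbnd : ∀ z : ℂ, z ≠ 0 → ‖h z‖ ≤ K * (max ‖z‖ ‖z‖⁻¹) ^ m := by
    intro z hz
    set r : ℝ := ‖z‖ with hr
    have hr0 : 0 < r := norm_pos_iff.2 hz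
    have hlog : ‖Complex.log z / τ‖ ≤ (|Real.log r| + Real.pi) / (2 * Real.pi) := by
      rw [norm_div, hτnorm]
      gcongr
      calc ‖Complex.log z‖ ≤ |(Complex.log z).re| + |(Complex.log z).im| :=
            Complex.norm_le_abs_re_add_abs_im _
      _ ≤ |Real.log r| + Real.pi := by
          rw [Complex.log_re, Complex.log_im]
          exact add_le_add (le_of_eq (by rw [hr]))
            (Complex.abs_arg_le_pi z)
    have hexplog : Real.exp |Real.log r| ≤ max r r⁻¹ := by
      rcases le_or_gt 1 r with h1 | h1
      · rw [_root_.abs_of_nonneg (Real.log_nonneg h1), Real.exp_log hr0]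
        exact le_max_left _ _
      · rw [_root_.abs_of_neg (Real.log_neg hr0 h1), ← Real.log_inv, Real.exp_log (by positivity)]
        exact le_max_right _ _
    calc ‖h z‖ ≤ A * Real.exp (c * ‖Complex.log z / τ‖) := hb _
    _ ≤ A * Real.exp (c * ((|Real.log r| + Real.pi) / (2 * Real.pi))) := by
        apply mul_le_mul_of_nonneg_left _ hA
        exact Real.exp_le_exp.2 (mul_le_mul_of_nonneg_left hlog hc)
    _ = K * Real.exp ((c / (2 * Real.pi)) * |Real.log r|) := by
        rw [hK, mul_assoc, ← Real.exp_add]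
        congr 1
        have hpi : (2:ℝ) * Real.pi ≠ 0 := by positivity
        field_simp
        ring
    _ ≤ K * Real.exp ((m : ℝ) * |Real.log r|) := by
        apply mul_le_mul_of_nonneg_left _ hKpos
        exact Real.exp_le_exp.2 (mul_le_mul_of_nonneg_right (Nat.le_ceil _) (abs_nonneg _))
    _ = K * (Real.exp |Real.log r|) ^ m := by rw [← Real.exp_nat_mul]
    _ ≤ K * (max r r⁻¹) ^ m := by
        apply mul_le_mul_of_nonneg_left _ hKpos
        exact pow_le_pow_left₀ (Real.exp_nonneg _) hexplog m
  set H : ℂ → ℂ := fun z => z ^ m * h z with hH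
  have HB : ∀ z : ℂ, z ≠ 0 → ‖H z‖ ≤ K * max 1 ‖z‖ ^ (2 * m) := by
    intro z hz
    have hr0 : 0 < ‖z‖ := norm_pos_iff.2 hz
    have h1m : (1:ℝ) ≤ max 1 ‖z‖ ^ (2*m) := one_le_pow₀ (le_max_left _ _)
    have : ‖H z‖ ≤ ‖z‖ ^ m * (K * (max ‖z‖ ‖z‖⁻¹) ^ m) := by
      rw [hH]
      simp only [norm_mul, norm_pow]
      exact mul_le_mul_of_nonneg_left (hbnd z hz) (by positivity)
    rcases le_or_gt ‖z‖ 1 with h1 | h1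
    · have hmax : max ‖z‖ ‖z‖⁻¹ = ‖z‖⁻¹ := max_eq_right ((one_le_inv₀ hr0).2 h1 |>.trans'
        h1)
      rw [hmax] at this
      have heq : ‖z‖ ^ m * (K * (‖z‖⁻¹) ^ m) = K := by
        rw [inv_pow, mul_comm K, ← mul_assoc, mul_inv_cancel₀ (by positivity), one_mul]
      rw [heq] at this
      nlinarith
    · have hmax : max ‖z‖ ‖z‖⁻¹ = ‖z‖ := max_eq_left ((inv_le_one_of_one_le₀ h1.le).trans h1.le)
      rw [hmax] at this
      have hmx : max 1 ‖z‖ = ‖z‖ := max_eq_right h1.le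
      calc ‖H z‖ ≤ ‖z‖ ^ m * (K * ‖z‖ ^ m) := this
      _ = K * ‖z‖ ^ (2*m) := by rw [two_mul, pow_add]; ring
      _ = K * max 1 ‖z‖ ^ (2*m) := by rw [hmx]
  -- removable singularity at 0
  have HdiffOn : DifferentiableOn ℂ H (Metric.ball (0:ℂ) 1 \ {0}) := by
    intro z hz
    exact ((differentiableAt_pow m).mul (hdiff z hz.2)).differentiableWithinAt
  have Hbdd : BddAbove (norm ∘ H '' (Metric.ball (0:ℂ) 1 \ {0})) := by
    refine ⟨K, ?_⟩
    rintro y ⟨w, ⟨hw1, hw2⟩, rfl⟩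
    simp only [Function.comp_apply]
    have := HB w hw2
    have hwle : ‖w‖ ≤ 1 := le_of_lt (by simpa using hw1)
    have : max 1 ‖w‖ = 1 := max_eq_left hwle
    calc ‖H w‖ ≤ K * max 1 ‖w‖ ^ (2*m) := HB w hw2
    _ = K := by rw [this]; simp
  set G : ℂ → ℂ := Function.update H 0 (Filter.limUnder (nhdsWithin 0 {(0:ℂ)}ᶜ) H) with hG
  have hGdiffBall : DifferentiableOn ℂ G (Metric.ball (0:ℂ) 1) :=
    Complex.differentiableOn_update_limUnder_of_bddAbove
      (Metric.ball_mem_nhds 0 one_pos) HdiffOn Hbdd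
  have hGeq : ∀ z : ℂ, z ≠ 0 → G z = H z := fun z hz => Function.update_of_ne hz _ _
  have hGdiff : Differentiable ℂ G := by
    intro z
    by_cases hz : z = 0
    · subst hz
      exact (hGdiffBall.differentiableAt (Metric.ball_mem_nhds 0 one_pos))
    · have : DifferentiableAt ℂ H z := (differentiableAt_pow m).mul (hdiff z hz)
      apply this.congr_of_eventuallyEq
      filter_upwards [isOpen_compl_singleton.mem_nhds (by simpa using hz)] with w hw
      exact hGeq w (by simpa using hw)
  have hGB : ∀ z : ℂ, ‖G z‖ ≤ (K + ‖G 0‖) * max 1 ‖z‖ ^ (2*m) := by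
    intro z
    have h1m : (1:ℝ) ≤ max 1 ‖z‖ ^ (2*m) := one_le_pow₀ (le_max_left _ _)
    by_cases hz : z = 0
    · subst hz
      nlinarith [norm_nonneg (G 0)]
    · rw [hGeq z hz]
      have := HB z hz
      nlinarith [norm_nonneg (G 0), norm_nonneg (H z)]
  obtain ⟨p, hp⟩ := poly_of_growth (2*m) G hGdiff _ hGB
  refine ⟨p, m, fun s => ?_⟩
  have he : Complex.exp (τ * s) ≠ 0 := Complex.exp_ne_zero _
  have h1 : G (Complex.exp (τ * s)) = Complex.exp (τ * s) ^ m * f s := by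
    rw [hGeq _ he, hH]
    simp only
    rw [hcomp]
  have h2 := hp (Complex.exp (τ * s))
  rw [h1] at h2
  rw [hτ] at h2 he ⊢
  rw [eq_div_iff (pow_ne_zero m he)]
  linear_combination h2

lemma diff_eval {N : ℕ} (ρ : ℂ → Matrix (Fin N) (Fin N) ℂ)
    (hhol : ∀ i j, Differentiable ℂ (fun s => ρ s i j))
    (P : MvPolynomial (Fin N × Fin N) ℂ) :
    Differentiable ℂ (fun s => MvPolynomial.eval (fun p => ρ s p.1 p.2) P) := by
  induction P using MvPolynomial.induction_on with
  | C a => simpa using differentiable_const a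
  | add p q hp hq => simp only [map_add]; exact hp.add hq
  | mul_X p i hp => simp only [map_mul, MvPolynomial.eval_X]; exact hp.mul (hhol i.1 i.2)

lemma bound_eval {N : ℕ} (ρ : ℂ → Matrix (Fin N) (Fin N) ℂ)
    {C C' : ℝ} (hC : 0 < C) (hC' : 0 < C')
    (hbound : ∀ s : ℂ, ∀ i j, ‖ρ s i j‖ ≤ C' * Real.exp (C * ‖s‖))
    (P : MvPolynomial (Fin N × Fin N) ℂ) :
    ∃ A ≥ (0:ℝ), ∃ c ≥ (0:ℝ), ∀ s,
      ‖MvPolynomial.eval (fun p => ρ s p.1 p.2) P‖ ≤ A * Real.exp (c * ‖s‖) := by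
  induction P using MvPolynomial.induction_on with
  | C a =>
    exact ⟨‖a‖, norm_nonneg a, 0, le_refl 0, fun s => by simp⟩
  | add p q hp hq =>
    obtain ⟨A₁, hA₁, c₁, hc₁, h₁⟩ := hp
    obtain ⟨A₂, hA₂, c₂, hc₂, h₂⟩ := hq
    refine ⟨A₁ + A₂, by linarith, max c₁ c₂, le_max_of_le_left hc₁, fun s => ?_⟩
    have e₁ : Real.exp (c₁ * ‖s‖) ≤ Real.exp (max c₁ c₂ * ‖s‖) :=
      Real.exp_le_exp.2 (mul_le_mul_of_nonneg_right (le_max_left _ _) (norm_nonneg s))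
    have e₂ : Real.exp (c₂ * ‖s‖) ≤ Real.exp (max c₁ c₂ * ‖s‖) :=
      Real.exp_le_exp.2 (mul_le_mul_of_nonneg_right (le_max_right _ _) (norm_nonneg s))
    calc ‖MvPolynomial.eval (fun p => ρ s p.1 p.2) (p + q)‖
        ≤ ‖MvPolynomial.eval (fun p => ρ s p.1 p.2) p‖ +
          ‖MvPolynomial.eval (fun p => ρ s p.1 p.2) q‖ := by
          rw [map_add]; exact norm_add_le _ _
    _ ≤ A₁ * Real.exp (c₁ * ‖s‖) + A₂ * Real.exp (c₂ * ‖s‖) := add_le_add (h₁ s) (h₂ s)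
    _ ≤ (A₁ + A₂) * Real.exp (max c₁ c₂ * ‖s‖) := by nlinarith [Real.exp_pos (c₁ * ‖s‖)]
  | mul_X p i hp =>
    obtain ⟨A, hA, c, hc, h⟩ := hp
    refine ⟨A * C', by positivity, c + C, by linarith, fun s => ?_⟩
    calc ‖MvPolynomial.eval (fun p => ρ s p.1 p.2) (p * MvPolynomial.X i)‖
        = ‖MvPolynomial.eval (fun p => ρ s p.1 p.2) p‖ * ‖ρ s i.1 i.2‖ := by
          rw [map_mul, MvPolynomial.eval_X, norm_mul]
    _ ≤ (A * Real.exp (c * ‖s‖)) * (C' * Real.exp (C * ‖s‖)) := by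
        apply mul_le_mul (h s) (hbound s i.1 i.2) (norm_nonneg _) (by positivity)
    _ = A * C' * Real.exp ((c + C) * ‖s‖) := by
        rw [add_mul, Real.exp_add]; ring

/-- let `ρ : ℂ → Mat_N(ℂ)` be entrywise holomorphic and exponentially
bounded, with `ρ(s+1)` conjugate to `ρ(s)` for all `s` in a set `S` not contained in
a countable union of proper analytic subsets of ℂ (zero sets of nonzero entire
functions). Then for any conjugation-invariant polynomial function `Ψ` on `Mat_N(ℂ)`,
`Ψ(ρ(s)) = F(e^{2πis})` for a rational function `F = p/q`. -/
theorem invariant_of_generically_periodic_family_rational_in_exp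
    (N : ℕ) (ρ : ℂ → Matrix (Fin N) (Fin N) ℂ)
    (hhol : ∀ i j, Differentiable ℂ (fun s => ρ s i j))
    (hbound : ∃ C > 0, ∃ C' > 0, ∀ s : ℂ, ∀ i j,
      ‖ρ s i j‖ ≤ C' * Real.exp (C * ‖s‖))
    (S : Set ℂ)
    (hper : ∀ s ∈ S, ∃ g : Matrix (Fin N) (Fin N) ℂ, IsUnit g ∧
      ρ (s + 1) = g * ρ s * g⁻¹)
    (hS : ¬ ∃ Z : ℕ → Set ℂ,
      (∀ k, ∃ f : ℂ → ℂ, Differentiable ℂ f ∧ f ≠ 0 ∧ Z k ⊆ f ⁻¹' {0}) ∧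
      S ⊆ ⋃ k, Z k)
    (P : MvPolynomial (Fin N × Fin N) ℂ)
    (Ψ : Matrix (Fin N) (Fin N) ℂ → ℂ)
    (hΨ : ∀ A, Ψ A = MvPolynomial.eval (fun p => A p.1 p.2) P)
    (hinv : ∀ (g A : Matrix (Fin N) (Fin N) ℂ), IsUnit g → Ψ (g * A * g⁻¹) = Ψ A) :
    ∃ p q : Polynomial ℂ, q ≠ 0 ∧ ∀ s : ℂ,
      q.eval (Complex.exp (2 * (Real.pi : ℂ) * Complex.I * s)) ≠ 0 →
      Ψ (ρ s) = p.eval (Complex.exp (2 * (Real.pi : ℂ) * Complex.I * s)) /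
        q.eval (Complex.exp (2 * (Real.pi : ℂ) * Complex.I * s)) := by
  obtain ⟨C, hC, C', hC', hb⟩ := hbound
  set f : ℂ → ℂ := fun s => Ψ (ρ s) with hf
  have hfeq : ∀ s, f s = MvPolynomial.eval (fun p => ρ s p.1 p.2) P := fun s => hΨ (ρ s)
  have hfd : Differentiable ℂ f := by
    have h1 := diff_eval ρ hhol P
    have : f = fun s => MvPolynomial.eval (fun p => ρ s p.1 p.2) P := funext hfeq
    rw [this]
    exact h1
  obtain ⟨A, hA, c, hc, hAb⟩ := bound_eval ρ hC hC' hb P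
  have hfb : ∀ s, ‖f s‖ ≤ A * Real.exp (c * ‖s‖) := fun s => by
    rw [hfeq s]; exact hAb s
  -- periodicity
  have hperS : ∀ s ∈ S, f (s + 1) = f s := by
    intro s hs
    obtain ⟨g, hg, hrep⟩ := hper s hs
    rw [hf]
    simp only
    rw [hrep, hinv g (ρ s) hg]
  have hperiodic : ∀ s, f (s + 1) = f s := by
    by_contra hcon
    push_neg at hcon
    obtain ⟨s₀, hs₀⟩ := hcon
    set d : ℂ → ℂ := fun s => f (s + 1) - f s with hd
    apply hS
    refine ⟨fun _ => d ⁻¹' {0}, fun k => ⟨d, ?_, ?_, subset_rfl⟩, fun s hs => ?_⟩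
    · exact (hfd.comp (differentiable_id.add_const 1)).sub hfd
    · intro h
      apply hs₀
      have := congrFun h s₀
      simpa [hd, sub_eq_zero] using this
    · refine Set.mem_iUnion.2 ⟨0, ?_⟩
      simp only [Set.mem_preimage, Set.mem_singleton_iff, hd]
      rw [hperS s hs, sub_self]
  obtain ⟨p, m, hpm⟩ := periodic_expbound_rat f hfd hperiodic A c hA hc hfb
  refine ⟨p, Polynomial.X ^ m, pow_ne_zero m Polynomial.X_ne_zero, fun s _ => ?_⟩
  have := hpm s
  rw [Polynomial.eval_pow, Polynomial.eval_X]
  exact this
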